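/- arXiv:math/0703895 — 6 statements merged into one kernel-verified Lean document; each statement's English description precedes it below -/
import Mathlib

section
/- Let A₁₂ = {(φ,ξ) ∈ (-π/2,π/2) × [0,1] : -tan φ < ξ < 1 - tan φ}. Then (3/8) ∫∫_{A₁₂} 2 cos φ dφ dξ = (3/2)(√2 - 1). -/
open Real MeasureTheory Set

private lemma slice_vol (t : ℝ) :
    volume (Icc (0:ℝ) 1 ∩ Ioo (-t) (1-t)) = ENNReal.ofReal (1 - |t|) := by
  set a := max (-t) 0 with ha
  set b := min (1-t) 1 with hb
  have hba : b - a = 1 - |t| := by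
    rcases le_total 0 t with ht | ht
    · rw [ha, hb, max_eq_right (by linarith), min_eq_left (by linarith), abs_of_nonneg ht]
      ring
    · rw [ha, hb, max_eq_left (by linarith), min_eq_right (by linarith), abs_of_nonpos ht]
  have hsub1 : Ioo a b ⊆ Icc (0:ℝ) 1 ∩ Ioo (-t) (1-t) := by
    intro y hy
    have h3 : a < y := hy.1
    have h4 : y < b := hy.2
    have h5 : -t ≤ a := le_max_left _ _
    have h6 : (0:ℝ) ≤ a := le_max_right _ _
    have h7 : b ≤ 1-t := min_le_left _ _
    have h8 : b ≤ 1 := min_le_right _ _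
    exact ⟨⟨by linarith, by linarith⟩, by linarith, by linarith⟩
  have hsub2 : Icc (0:ℝ) 1 ∩ Ioo (-t) (1-t) ⊆ Icc a b := by
    intro y hy
    obtain ⟨⟨hy1, hy2⟩, hy3, hy4⟩ := hy
    exact ⟨max_le (le_of_lt hy3) hy1, le_min (le_of_lt hy4) hy2⟩
  have hm1 := measure_mono (μ := (volume : Measure ℝ)) hsub1
  have hm2 := measure_mono (μ := (volume : Measure ℝ)) hsub2
  rw [Real.volume_Ioo] at hm1
  rw [Real.volume_Icc] at hm2
  rw [hba] at hm1 hm2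
  exact le_antisymm hm2 hm1

private lemma final_1d :
    ∫ x in Ioo (-(π/4)) (π/4), (2*Real.cos x - 2*|Real.sin x|) = 4*Real.sqrt 2 - 4 := by
  have hpi : (0:ℝ) < π/4 := by positivity
  have hle : (-(π/4) : ℝ) ≤ π/4 := by linarith
  rw [← MeasureTheory.integral_Ioc_eq_integral_Ioo, ← intervalIntegral.integral_of_le hle]
  have hcos : ∫ x in (-(π/4))..(π/4), 2*Real.cos x = 2*Real.sqrt 2 := by
    rw [intervalIntegral.integral_const_mul, integral_cos, Real.sin_pi_div_four,
      Real.sin_neg, Real.sin_pi_div_four]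
    ring
  have hs1 : ∫ x in (-(π/4))..(0:ℝ), |Real.sin x| = 1 - Real.sqrt 2/2 := by
    have : ∫ x in (-(π/4))..(0:ℝ), |Real.sin x| = ∫ x in (-(π/4))..(0:ℝ), -Real.sin x := by
      apply intervalIntegral.integral_congr
      intro x hx
      rw [Set.uIcc_of_le (by linarith)] at hx
      have h1 : Real.sin x ≤ 0 :=
        Real.sin_nonpos_of_nonpos_of_neg_pi_le hx.2 (by linarith [hx.1, pi_pos])
      simp [abs_of_nonpos h1]
    rw [this, intervalIntegral.integral_neg, integral_sin, Real.cos_neg, Real.cos_pi_div_four,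
      Real.cos_zero]
    ring
  have hs2 : ∫ x in (0:ℝ)..(π/4), |Real.sin x| = 1 - Real.sqrt 2/2 := by
    have : ∫ x in (0:ℝ)..(π/4), |Real.sin x| = ∫ x in (0:ℝ)..(π/4), Real.sin x := by
      apply intervalIntegral.integral_congr
      intro x hx
      rw [Set.uIcc_of_le (by linarith)] at hx
      have h1 : 0 ≤ Real.sin x :=
        Real.sin_nonneg_of_nonneg_of_le_pi hx.1 (by linarith [hx.2, pi_gt_three])
      exact abs_of_nonneg h1
    rw [this, integral_sin, Real.cos_pi_div_four, Real.cos_zero]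
  have hsin : ∫ x in (-(π/4))..(π/4), 2*|Real.sin x| = 4 - 2*Real.sqrt 2 := by
    rw [intervalIntegral.integral_const_mul,
      ← intervalIntegral.integral_add_adjacent_intervals
        (a := -(π/4)) (b := 0) (c := π/4)
        ((Real.continuous_sin.abs).intervalIntegrable _ _)
        ((Real.continuous_sin.abs).intervalIntegrable _ _),
      hs1, hs2]
    ring
  rw [intervalIntegral.integral_sub (f := fun x => 2*Real.cos x) (g := fun x => 2*|Real.sin x|)
    ((continuous_const.mul Real.continuous_cos).intervalIntegrable _ _)
    ((continuous_const.mul Real.continuous_sin.abs).intervalIntegrable _ _), hcos, hsin]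
  ring

theorem triangle_double_reflection_contribution :
    (3/8 : ℝ) * ∫ p in {p : ℝ × ℝ | p.1 ∈ Set.Ioo (-(π/2)) (π/2) ∧
        p.2 ∈ Set.Icc (0:ℝ) 1 ∧ -Real.tan p.1 < p.2 ∧ p.2 < 1 - Real.tan p.1},
      2 * Real.cos p.1 = (3/2) * (Real.sqrt 2 - 1) := by
  have mtan : Measurable Real.tan := by
    have h : Real.tan = fun x => Real.sin x / Real.cos x :=
      funext fun x => Real.tan_eq_sin_div_cos x
    rw [h]; exact Real.measurable_sin.div Real.measurable_cos
  set F : ℝ × ℝ → ℝ := fun p => 2 * Real.cos p.1 with hF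
  set S : Set (ℝ × ℝ) := {p : ℝ × ℝ | p.1 ∈ Set.Ioo (-(π/2)) (π/2) ∧
      p.2 ∈ Set.Icc (0:ℝ) 1 ∧ -Real.tan p.1 < p.2 ∧ p.2 < 1 - Real.tan p.1} with hSdef
  have hSm : MeasurableSet S :=
    ((measurableSet_Ioo).preimage measurable_fst).inter
      (((measurableSet_Icc).preimage measurable_snd).inter
        ((measurableSet_lt (mtan.comp measurable_fst).neg measurable_snd).inter
          (measurableSet_lt measurable_snd (measurable_const.sub (mtan.comp measurable_fst)))))
  have hvol : volume S < ⊤ := by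
    have hsub : S ⊆ Icc (-(π/2)) (π/2) ×ˢ Icc (0:ℝ) 1 := by
      rintro ⟨x, y⟩ ⟨hx, hy, -, -⟩
      exact ⟨⟨le_of_lt hx.1, le_of_lt hx.2⟩, hy⟩
    exact lt_of_le_of_lt (measure_mono hsub)
      ((isCompact_Icc.prod isCompact_Icc).measure_lt_top)
  have hFc : Continuous F := continuous_const.mul (Real.continuous_cos.comp continuous_fst)
  have hInt : IntegrableOn F S := by
    have hc : IntegrableOn (fun _ : ℝ × ℝ => (2:ℝ)) S :=
      integrableOn_const (ne_of_lt hvol) (by simp)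
    refine Integrable.mono' hc (hFc.aestronglyMeasurable.restrict) ?_
    filter_upwards with p
    rw [hF]
    simp only [Real.norm_eq_abs, abs_mul, abs_two]
    nlinarith [abs_cos_le_one p.1, abs_nonneg (Real.cos p.1)]
  have hIndInt : Integrable (S.indicator F) := (integrable_indicator_iff hSm).2 hInt
  have step1 : ∫ p in S, F p = ∫ p, S.indicator F p := (integral_indicator hSm).symm
  have step2 : ∫ p, S.indicator F p = ∫ x, ∫ y, S.indicator F (x, y) := by
    rw [MeasureTheory.Measure.volume_eq_prod ℝ ℝ] at hIndInt ⊢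
    exact MeasureTheory.integral_prod _ hIndInt
  set J : Set ℝ := Ioo (-(π/4)) (π/4) with hJdef
  set h : ℝ → ℝ := fun x => 2*Real.cos x - 2*|Real.sin x| with hh
  have key : ∀ x : ℝ, (∫ y, S.indicator F (x, y)) = J.indicator h x := by
    intro x
    by_cases hxJ : x ∈ J
    · -- x ∈ (-π/4, π/4)
      have hpi : (0:ℝ) < π/4 := by positivity
      have hx2 : x ∈ Ioo (-(π/2)) (π/2) := ⟨by have := hxJ.1; linarith, by have := hxJ.2; linarith⟩
      have hcosx : 0 < Real.cos x := Real.cos_pos_of_mem_Ioo hx2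
      have htan1 : Real.tan x < 1 := by
        calc Real.tan x < Real.tan (π/4) :=
          Real.strictMonoOn_tan hx2 ⟨by linarith [pi_pos], by linarith [pi_pos]⟩ hxJ.2
        _ = 1 := Real.tan_pi_div_four
      have htan2 : -1 < Real.tan x := by
        have : Real.tan (-(π/4)) < Real.tan x :=
          Real.strictMonoOn_tan ⟨by linarith [pi_pos], by linarith [pi_pos]⟩ hx2 hxJ.1
        rwa [Real.tan_neg, Real.tan_pi_div_four] at this
      have heq : (fun y => S.indicator F (x, y)) =
          (Icc (0:ℝ) 1 ∩ Ioo (-Real.tan x) (1 - Real.tan x)).indicator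
            (fun _ => 2 * Real.cos x) := by
        funext y
        by_cases hy : y ∈ Icc (0:ℝ) 1 ∩ Ioo (-Real.tan x) (1 - Real.tan x)
        · rw [Set.indicator_of_mem hy]
          have : (x, y) ∈ S := ⟨hx2, hy.1, hy.2.1, hy.2.2⟩
          rw [Set.indicator_of_mem this]
        · rw [Set.indicator_of_notMem hy]
          have : (x, y) ∉ S := by
            intro hmem
            exact hy ⟨hmem.2.1, hmem.2.2.1, hmem.2.2.2⟩
          rw [Set.indicator_of_notMem this]
      rw [heq, integral_indicator (measurableSet_Icc.inter measurableSet_Ioo),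
        setIntegral_const, measureReal_def, slice_vol, ENNReal.toReal_ofReal (by
          have := abs_lt.2 ⟨htan2, htan1⟩; linarith), smul_eq_mul]
      rw [Set.indicator_of_mem hxJ, hh]
      have habs : |Real.tan x| * Real.cos x = |Real.sin x| := by
        rw [← abs_of_pos hcosx, ← abs_mul, Real.tan_mul_cos (ne_of_gt hcosx)]
      have hring : (1 - |Real.tan x|) * (2*Real.cos x)
          = 2*Real.cos x - 2*(|Real.tan x| * Real.cos x) := by ring
      rw [hring, habs]
    · -- x ∉ J : the slice is empty
      rw [Set.indicator_of_notMem hxJ]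
      have hzero : ∀ y : ℝ, S.indicator F (x, y) = 0 := by
        intro y
        apply Set.indicator_of_notMem
        rintro ⟨hx2, hy, hlt1, hlt2⟩
        apply hxJ
        rw [hJdef]
        constructor
        · by_contra hc
          push_neg at hc
          have hxle : x ≤ -(π/4) := by linarith
          have : Real.tan x ≤ Real.tan (-(π/4)) := by
            rcases eq_or_lt_of_le hxle with he | hlt
            · rw [he]
            · exact le_of_lt (Real.strictMonoOn_tan hx2
                ⟨by linarith [hx2.2, pi_pos], by linarith [pi_pos]⟩ hlt)
          rw [Real.tan_neg, Real.tan_pi_div_four] at this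
          have h1 : (1:ℝ) ≤ -Real.tan x := by linarith
          have := hy.2
          linarith
        · by_contra hc
          push_neg at hc
          have hxge : (π/4) ≤ x := hc
          have : Real.tan (π/4) ≤ Real.tan x := by
            rcases eq_or_lt_of_le hxge with he | hlt
            · rw [he]
            · exact le_of_lt (Real.strictMonoOn_tan
                ⟨by linarith [pi_pos], by linarith [pi_pos]⟩ hx2 hlt)
          rw [Real.tan_pi_div_four] at this
          have := hy.1
          linarith
      simp only [hzero, integral_zero]
  have step3 : ∫ x, ∫ y, S.indicator F (x, y) = ∫ x, J.indicator h x := by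
    congr 1
    funext x
    exact key x
  have step4 : ∫ x, J.indicator h x = ∫ x in J, h x := integral_indicator measurableSet_Ioo
  rw [step1, step2, step3, step4, hJdef, hh]
  rw [final_1d]
  ring
end

section
/- For the right isosceles triangle cavity Ω = {(x₁,x₂): 0 ≤ x₁ ≤ 1, 0 ≤ x₂ ≤ 1/2 - |1/2 - x₁|}, the resistance functional equals F(Ω) = √2. Explicitly, (3/8)[∫∫_{ξ < -tan φ}(1 + cos(π/2 + 2φ)) cos φ + ∫∫_{ξ > 1 - tan φ}(1 + cos(2φ - π/2)) cos φ + ∫∫_{-tan φ < ξ < 1 - tan φ} 2 cos φ] dφ dξ = √2, where all regions are subsets of (-π/2,π/2) × [0,1]. -/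
open Real MeasureTheory Set

private lemma mtan : Measurable Real.tan := by
  have h : Real.tan = fun x => Real.sin x / Real.cos x :=
    funext fun x => Real.tan_eq_sin_div_cos x
  rw [h]
  exact Real.continuous_sin.measurable.div Real.continuous_cos.measurable

private lemma tan_mono {x y : ℝ} (hx : -(π/2) < x) (hxy : x ≤ y) (hy : y < π/2) :
    Real.tan x ≤ Real.tan y := by
  rcases hxy.eq_or_lt with rfl | h
  · exact le_rfl
  · exact (Real.tan_lt_tan_of_lt_of_lt_pi_div_two hx hy h).le

private lemma vol_sec (u v : ℝ) :
    (volume (Icc (0:ℝ) 1 ∩ Ioo u v)).toReal = max (min v 1 - max u 0) 0 := by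
  have h1 : Ioo (max u 0) (min v 1) ⊆ Icc (0:ℝ) 1 ∩ Ioo u v := by
    intro x hx
    simp only [mem_Ioo, lt_min_iff, max_lt_iff] at hx
    obtain ⟨⟨hu, h0⟩, hv, h1'⟩ := hx
    exact ⟨⟨h0.le, h1'.le⟩, hu, hv⟩
  have h2 : Icc (0:ℝ) 1 ∩ Ioo u v ⊆ Icc (max u 0) (min v 1) := by
    rintro x ⟨⟨h0, h1'⟩, hu, hv⟩
    exact ⟨max_le hu.le h0, le_min hv.le h1'⟩
  have e1 : volume (Ioo (max u 0) (min v 1)) ≤ volume (Icc (0:ℝ) 1 ∩ Ioo u v) :=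
    measure_mono h1
  have e2 : volume (Icc (0:ℝ) 1 ∩ Ioo u v) ≤ volume (Icc (max u 0) (min v 1)) :=
    measure_mono h2
  rw [Real.volume_Ioo] at e1
  rw [Real.volume_Icc] at e2
  have h3 : volume (Icc (0:ℝ) 1 ∩ Ioo u v) = ENNReal.ofReal (min v 1 - max u 0) :=
    le_antisymm e2 e1
  rw [h3, ENNReal.toReal_ofReal']

private lemma fubini_sec (c d g : ℝ → ℝ) (hc : Measurable c) (hd : Measurable d)
    (hg : Continuous g) :
    (∫ p in {p : ℝ × ℝ | p.1 ∈ Set.Ioo (-(π/2)) (π/2) ∧ p.2 ∈ Set.Icc (0:ℝ) 1 ∧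
        c p.1 < p.2 ∧ p.2 < d p.1}, g p.1) =
    ∫ x in Ioo (-(π/2)) (π/2), max (min (d x) 1 - max (c x) 0) 0 * g x := by
  set S : Set (ℝ × ℝ) := {p : ℝ × ℝ | p.1 ∈ Set.Ioo (-(π/2)) (π/2) ∧ p.2 ∈ Set.Icc (0:ℝ) 1 ∧
        c p.1 < p.2 ∧ p.2 < d p.1} with hSdef
  have hS : MeasurableSet S := by
    have m1 : MeasurableSet {p : ℝ × ℝ | p.1 ∈ Set.Ioo (-(π/2)) (π/2)} :=
      measurable_fst measurableSet_Ioo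
    have m2 : MeasurableSet {p : ℝ × ℝ | p.2 ∈ Set.Icc (0:ℝ) 1} :=
      measurable_snd measurableSet_Icc
    have m3 : MeasurableSet {p : ℝ × ℝ | c p.1 < p.2} :=
      measurableSet_lt (hc.comp measurable_fst) measurable_snd
    have m4 : MeasurableSet {p : ℝ × ℝ | p.2 < d p.1} :=
      measurableSet_lt measurable_snd (hd.comp measurable_fst)
    have : S = {p : ℝ × ℝ | p.1 ∈ Set.Ioo (-(π/2)) (π/2)} ∩
        ({p : ℝ × ℝ | p.2 ∈ Set.Icc (0:ℝ) 1} ∩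
          ({p : ℝ × ℝ | c p.1 < p.2} ∩ {p : ℝ × ℝ | p.2 < d p.1})) := by
      ext p; simp [hSdef, and_assoc]
    rw [this]
    exact m1.inter (m2.inter (m3.inter m4))
  have hint : Integrable (S.indicator fun p : ℝ × ℝ => g p.1) volume := by
    rw [integrable_indicator_iff hS]
    have hbig : IntegrableOn (fun p : ℝ × ℝ => g p.1)
        (Icc (-(π/2)) (π/2) ×ˢ Icc (0:ℝ) 1) volume := by
      apply ContinuousOn.integrableOn_compact (isCompact_Icc.prod isCompact_Icc)
      exact (hg.comp continuous_fst).continuousOn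
    apply hbig.mono_set
    rintro ⟨x, y⟩ ⟨hx, hy, _⟩
    exact ⟨⟨hx.left.le, hx.right.le⟩, hy⟩
  rw [← integral_indicator hS, ← integral_indicator (measurableSet_Ioo :
      MeasurableSet (Ioo (-(π/2)) (π/2)))]
  rw [Measure.volume_eq_prod] at hint ⊢
  rw [integral_prod _ hint]
  congr 1
  funext x
  by_cases hx : x ∈ Ioo (-(π/2)) (π/2)
  · have hyeq : ∀ y : ℝ, S.indicator (fun p : ℝ × ℝ => g p.1) (x, y) =
        (Icc (0:ℝ) 1 ∩ Ioo (c x) (d x)).indicator (fun _ => g x) y := by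
      intro y
      by_cases hy : y ∈ Icc (0:ℝ) 1 ∩ Ioo (c x) (d x)
      · rw [indicator_of_mem hy, indicator_of_mem]
        exact ⟨hx, hy.1, hy.2.1, hy.2.2⟩
      · rw [indicator_of_notMem hy, indicator_of_notMem]
        rintro ⟨_, h2, h3, h4⟩
        exact hy ⟨h2, h3, h4⟩
    simp only [hyeq]
    rw [integral_indicator_const _ (measurableSet_Icc.inter measurableSet_Ioo),
      indicator_of_mem hx, smul_eq_mul, measureReal_def, vol_sec]
  · have hyeq : ∀ y : ℝ, S.indicator (fun p : ℝ × ℝ => g p.1) (x, y) = 0 := by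
      intro y
      apply indicator_of_notMem
      rintro ⟨h1, _⟩
      exact hx h1
    simp only [hyeq, integral_zero, indicator_of_notMem hx]

private lemma piece (h f F : ℝ → ℝ) {a b : ℝ} (hab : a ≤ b) (hf : Continuous f)
    (heq : Set.EqOn h f (Icc a b))
    (hder : ∀ x ∈ Icc a b, HasDerivAt F (f x) x) :
    IntervalIntegrable h volume a b ∧ (∫ x in a..b, h x) = F b - F a := by
  have hi : IntervalIntegrable h volume a b := by
    rw [intervalIntegrable_iff_integrableOn_Ioc_of_le hab]
    exact (hf.integrableOn_Ioc).congr_fun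
      (fun x hx => (heq (Ioc_subset_Icc_self hx)).symm) measurableSet_Ioc
  refine ⟨hi, ?_⟩
  rw [intervalIntegral.integral_congr (g := f) (by rw [uIcc_of_le hab]; exact heq)]
  exact intervalIntegral.integral_eq_sub_of_hasDerivAt
    (fun x hx => hder x (by rwa [uIcc_of_le hab] at hx)) (hf.intervalIntegrable a b)

private lemma reg1 :
    (∫ p in {p : ℝ × ℝ | p.1 ∈ Set.Ioo (-(π/2)) (π/2) ∧
          p.2 ∈ Set.Icc (0:ℝ) 1 ∧ p.2 < -Real.tan p.1},
        (1 + Real.cos (π/2 + 2*p.1)) * Real.cos p.1) = 2 - 2 * Real.sqrt 2 / 3 := by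
  have hπ := Real.pi_pos
  have e1 : {p : ℝ × ℝ | p.1 ∈ Set.Ioo (-(π/2)) (π/2) ∧
          p.2 ∈ Set.Icc (0:ℝ) 1 ∧ p.2 < -Real.tan p.1}
      = {p : ℝ × ℝ | p.1 ∈ Set.Ioo (-(π/2)) (π/2) ∧ p.2 ∈ Set.Icc (0:ℝ) 1 ∧
          (fun _ : ℝ => (-1:ℝ)) p.1 < p.2 ∧ p.2 < (fun x => -Real.tan x) p.1} := by
    ext p
    simp only [mem_setOf_eq]
    constructor
    · rintro ⟨h1, h2, h3⟩
      exact ⟨h1, h2, by simpa using (by linarith [h2.1] : (-1:ℝ) < p.2), h3⟩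
    · rintro ⟨h1, h2, _, h4⟩
      exact ⟨h1, h2, h4⟩
  rw [e1, fubini_sec (fun _ => (-1:ℝ)) (fun x => -Real.tan x)
      (fun x => (1 + Real.cos (π/2 + 2*x)) * Real.cos x) measurable_const mtan.neg
      (by fun_prop)]
  set h : ℝ → ℝ := fun x =>
      max (min (-Real.tan x) 1 - max (-1:ℝ) 0) 0 * ((1 + Real.cos (π/2 + 2*x)) * Real.cos x)
    with hh
  have cosadd : ∀ x : ℝ, Real.cos (π/2 + 2*x) = -(2 * Real.sin x * Real.cos x) := by
    intro x
    rw [Real.cos_add, Real.cos_pi_div_two, Real.sin_pi_div_two, Real.sin_two_mul]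
    ring
  have p1 := piece h (fun x => Real.cos x - 2*Real.sin x*Real.cos x^2)
      (fun x => Real.sin x + 2/3*Real.cos x^3) (a := -(π/2)) (b := -(π/4))
      (by linarith)
      (by fun_prop)
      (by
        intro x hx
        have hx1 := hx.1
        have hx2 := hx.2
        simp only [hh]
        rcases hx1.eq_or_lt with heq | hlt
        · rw [← heq]
          simp [Real.cos_pi_div_two]
        · have ht : Real.tan x ≤ -1 := by
            calc Real.tan x ≤ Real.tan (-(π/4)) := tan_mono hlt hx2 (by linarith)
              _ = -1 := by rw [Real.tan_neg, Real.tan_pi_div_four]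
          rw [min_eq_right (by linarith : (1:ℝ) ≤ -Real.tan x),
            show max (-1:ℝ) 0 = 0 by norm_num, cosadd x]
          norm_num
          ring)
      (by
        intro x _
        have hd : HasDerivAt (fun x => Real.sin x + 2/3*Real.cos x^3)
            (Real.cos x + 2/3*((3:ℕ) * Real.cos x^(3-1) * (-Real.sin x))) x :=
          (Real.hasDerivAt_sin x).add (((Real.hasDerivAt_cos x).pow 3).const_mul (2/3))
        convert hd using 1
        norm_num
        ring)
  have p2 := piece h (fun x => -Real.sin x + 2*Real.sin x^2*Real.cos x)
      (fun x => Real.cos x + 2/3*Real.sin x^3) (a := -(π/4)) (b := 0)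
      (by linarith)
      (by fun_prop)
      (by
        intro x hx
        have hx1 := hx.1
        have hx2 := hx.2
        simp only [hh]
        have hcos : 0 < Real.cos x :=
          Real.cos_pos_of_mem_Ioo ⟨by linarith, by linarith⟩
        have ht1 : -1 ≤ Real.tan x := by
          calc (-1:ℝ) = Real.tan (-(π/4)) := by rw [Real.tan_neg, Real.tan_pi_div_four]
            _ ≤ Real.tan x := tan_mono (by linarith) hx1 (by linarith)
        have ht2 : Real.tan x ≤ 0 :=
          Real.tan_nonpos_of_nonpos_of_neg_pi_div_two_le hx2 (by linarith)
        rw [min_eq_left (by linarith : -Real.tan x ≤ 1),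
          show max (-1:ℝ) 0 = 0 by norm_num, sub_zero,
          max_eq_left (by linarith : (0:ℝ) ≤ -Real.tan x), cosadd x,
          Real.tan_eq_sin_div_cos]
        field_simp
        ring)
      (by
        intro x _
        have hd : HasDerivAt (fun x => Real.cos x + 2/3*Real.sin x^3)
            (-Real.sin x + 2/3*((3:ℕ) * Real.sin x^(3-1) * Real.cos x)) x :=
          (Real.hasDerivAt_cos x).add (((Real.hasDerivAt_sin x).pow 3).const_mul (2/3))
        convert hd using 1
        norm_num
        ring)
  have p3 := piece h (fun _ => (0:ℝ)) (fun _ => (0:ℝ)) (a := 0) (b := π/2)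
      (by linarith) continuous_const
      (by
        intro x hx
        have hx1 := hx.1
        have hx2 := hx.2
        simp only [hh]
        rcases hx2.eq_or_lt with heq | hlt
        · rw [heq, Real.tan_pi_div_two]
          norm_num
        · have ht : 0 ≤ Real.tan x := Real.tan_nonneg_of_nonneg_of_le_pi_div_two hx1 hlt.le
          have h1 : max (min (-Real.tan x) 1 - max (-1:ℝ) 0) 0 = 0 := by
            rw [show max (-1:ℝ) 0 = 0 by norm_num, sub_zero]
            apply max_eq_right
            calc min (-Real.tan x) 1 ≤ -Real.tan x := min_le_left _ _
              _ ≤ 0 := by linarith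
          rw [h1, zero_mul])
      (fun x _ => hasDerivAt_const x 0)
  obtain ⟨i1, v1⟩ := p1
  obtain ⟨i2, v2⟩ := p2
  obtain ⟨i3, v3⟩ := p3
  rw [← integral_Ioc_eq_integral_Ioo, ← intervalIntegral.integral_of_le (by linarith)]
  rw [← intervalIntegral.integral_add_adjacent_intervals i1 (i2.trans i3),
    ← intervalIntegral.integral_add_adjacent_intervals i2 i3, v1, v2, v3]
  simp only [Real.sin_neg, Real.cos_neg, Real.sin_pi_div_four, Real.cos_pi_div_four,
    Real.sin_pi_div_two, Real.cos_pi_div_two, Real.sin_zero, Real.cos_zero]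
  have h2 : Real.sqrt 2 ^ 2 = 2 := Real.sq_sqrt (by norm_num)
  linear_combination (Real.sqrt 2 / 6) * h2

private lemma reg2 :
    (∫ p in {p : ℝ × ℝ | p.1 ∈ Set.Ioo (-(π/2)) (π/2) ∧
          p.2 ∈ Set.Icc (0:ℝ) 1 ∧ 1 - Real.tan p.1 < p.2},
        (1 + Real.cos (2*p.1 - π/2)) * Real.cos p.1) = 2 - 2 * Real.sqrt 2 / 3 := by
  have hπ := Real.pi_pos
  have e1 : {p : ℝ × ℝ | p.1 ∈ Set.Ioo (-(π/2)) (π/2) ∧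
          p.2 ∈ Set.Icc (0:ℝ) 1 ∧ 1 - Real.tan p.1 < p.2}
      = {p : ℝ × ℝ | p.1 ∈ Set.Ioo (-(π/2)) (π/2) ∧ p.2 ∈ Set.Icc (0:ℝ) 1 ∧
          (fun x => 1 - Real.tan x) p.1 < p.2 ∧ p.2 < (fun _ : ℝ => (2:ℝ)) p.1} := by
    ext p
    simp only [mem_setOf_eq]
    constructor
    · rintro ⟨h1, h2, h3⟩
      exact ⟨h1, h2, h3, by simpa using (by linarith [h2.2] : p.2 < (2:ℝ))⟩
    · rintro ⟨h1, h2, h3, _⟩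
      exact ⟨h1, h2, h3⟩
  rw [e1, fubini_sec (fun x => 1 - Real.tan x) (fun _ => (2:ℝ))
      (fun x => (1 + Real.cos (2*x - π/2)) * Real.cos x) (measurable_const.sub mtan)
      measurable_const (by fun_prop)]
  set h : ℝ → ℝ := fun x =>
      max (min (2:ℝ) 1 - max (1 - Real.tan x) 0) 0 * ((1 + Real.cos (2*x - π/2)) * Real.cos x)
    with hh
  have cossub : ∀ x : ℝ, Real.cos (2*x - π/2) = 2 * Real.sin x * Real.cos x := by
    intro x
    rw [Real.cos_sub, Real.cos_pi_div_two, Real.sin_pi_div_two, Real.sin_two_mul]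
    ring
  have p1 := piece h (fun _ => (0:ℝ)) (fun _ => (0:ℝ)) (a := -(π/2)) (b := 0)
      (by linarith) continuous_const
      (by
        intro x hx
        have hx1 := hx.1
        have hx2 := hx.2
        simp only [hh]
        rcases hx1.eq_or_lt with heq | hlt
        · rw [← heq]
          rw [show Real.tan (-(π/2)) = 0 by rw [Real.tan_neg, Real.tan_pi_div_two, neg_zero]]
          norm_num
        · have ht : Real.tan x ≤ 0 :=
            Real.tan_nonpos_of_nonpos_of_neg_pi_div_two_le hx2 (by linarith)
          have h1 : max (min (2:ℝ) 1 - max (1 - Real.tan x) 0) 0 = 0 := by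
            rw [show min (2:ℝ) 1 = 1 by norm_num,
              max_eq_left (by linarith : (0:ℝ) ≤ 1 - Real.tan x)]
            apply max_eq_right
            linarith
          rw [h1, zero_mul])
      (fun x _ => hasDerivAt_const x 0)
  have p2 := piece h (fun x => Real.sin x + 2*Real.sin x^2*Real.cos x)
      (fun x => -Real.cos x + 2/3*Real.sin x^3) (a := 0) (b := π/4)
      (by linarith)
      (by fun_prop)
      (by
        intro x hx
        have hx1 := hx.1
        have hx2 := hx.2
        simp only [hh]
        have hcos : 0 < Real.cos x :=
          Real.cos_pos_of_mem_Ioo ⟨by linarith, by linarith⟩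
        have ht1 : 0 ≤ Real.tan x :=
          Real.tan_nonneg_of_nonneg_of_le_pi_div_two hx1 (by linarith)
        have ht2 : Real.tan x ≤ 1 := by
          calc Real.tan x ≤ Real.tan (π/4) := tan_mono (by linarith) hx2 (by linarith)
            _ = 1 := Real.tan_pi_div_four
        rw [show min (2:ℝ) 1 = 1 by norm_num,
          max_eq_left (by linarith : (0:ℝ) ≤ 1 - Real.tan x),
          show (1:ℝ) - (1 - Real.tan x) = Real.tan x by ring,
          max_eq_left ht1, cossub x, Real.tan_eq_sin_div_cos]
        field_simp)
      (by
        intro x _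
        have hd : HasDerivAt (fun x => -Real.cos x + 2/3*Real.sin x^3)
            (-(-Real.sin x) + 2/3*((3:ℕ) * Real.sin x^(3-1) * Real.cos x)) x :=
          ((Real.hasDerivAt_cos x).neg).add (((Real.hasDerivAt_sin x).pow 3).const_mul (2/3))
        convert hd using 1
        norm_num
        ring)
  have p3 := piece h (fun x => Real.cos x + 2*Real.sin x*Real.cos x^2)
      (fun x => Real.sin x - 2/3*Real.cos x^3) (a := π/4) (b := π/2)
      (by linarith)
      (by fun_prop)
      (by
        intro x hx
        have hx1 := hx.1
        have hx2 := hx.2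
        simp only [hh]
        rcases hx2.eq_or_lt with heq | hlt
        · rw [heq]
          simp [Real.cos_pi_div_two]
        · have ht : 1 ≤ Real.tan x := by
            calc (1:ℝ) = Real.tan (π/4) := Real.tan_pi_div_four.symm
              _ ≤ Real.tan x := tan_mono (by linarith) hx1 hlt
          rw [show min (2:ℝ) 1 = 1 by norm_num,
            max_eq_right (by linarith : 1 - Real.tan x ≤ 0), sub_zero,
            max_eq_left (by norm_num : (0:ℝ) ≤ 1), cossub x]
          ring)
      (by
        intro x _
        have hd : HasDerivAt (fun x => Real.sin x - 2/3*Real.cos x^3)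
            (Real.cos x - 2/3*((3:ℕ) * Real.cos x^(3-1) * (-Real.sin x))) x :=
          (Real.hasDerivAt_sin x).sub (((Real.hasDerivAt_cos x).pow 3).const_mul (2/3))
        convert hd using 1
        norm_num
        ring)
  obtain ⟨i1, v1⟩ := p1
  obtain ⟨i2, v2⟩ := p2
  obtain ⟨i3, v3⟩ := p3
  rw [← integral_Ioc_eq_integral_Ioo, ← intervalIntegral.integral_of_le (by linarith)]
  rw [← intervalIntegral.integral_add_adjacent_intervals i1 (i2.trans i3),
    ← intervalIntegral.integral_add_adjacent_intervals i2 i3, v1, v2, v3]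
  simp only [Real.sin_neg, Real.cos_neg, Real.sin_pi_div_four, Real.cos_pi_div_four,
    Real.sin_pi_div_two, Real.cos_pi_div_two, Real.sin_zero, Real.cos_zero]
  have h2 : Real.sqrt 2 ^ 2 = 2 := Real.sq_sqrt (by norm_num)
  linear_combination (Real.sqrt 2 / 6) * h2

private lemma reg3 :
    (∫ p in {p : ℝ × ℝ | p.1 ∈ Set.Ioo (-(π/2)) (π/2) ∧
          p.2 ∈ Set.Icc (0:ℝ) 1 ∧ -Real.tan p.1 < p.2 ∧ p.2 < 1 - Real.tan p.1},
        2 * Real.cos p.1) = 4 * Real.sqrt 2 - 4 := by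
  have hπ := Real.pi_pos
  have e1 : {p : ℝ × ℝ | p.1 ∈ Set.Ioo (-(π/2)) (π/2) ∧
          p.2 ∈ Set.Icc (0:ℝ) 1 ∧ -Real.tan p.1 < p.2 ∧ p.2 < 1 - Real.tan p.1}
      = {p : ℝ × ℝ | p.1 ∈ Set.Ioo (-(π/2)) (π/2) ∧ p.2 ∈ Set.Icc (0:ℝ) 1 ∧
          (fun x => -Real.tan x) p.1 < p.2 ∧ p.2 < (fun x => 1 - Real.tan x) p.1} := rfl
  rw [e1, fubini_sec (fun x => -Real.tan x) (fun x => 1 - Real.tan x)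
      (fun x => 2 * Real.cos x) mtan.neg (measurable_const.sub mtan) (by fun_prop)]
  set h : ℝ → ℝ := fun x =>
      max (min (1 - Real.tan x) 1 - max (-Real.tan x) 0) 0 * (2 * Real.cos x)
    with hh
  have p1 := piece h (fun _ => (0:ℝ)) (fun _ => (0:ℝ)) (a := -(π/2)) (b := -(π/4))
      (by linarith) continuous_const
      (by
        intro x hx
        have hx1 := hx.1
        have hx2 := hx.2
        simp only [hh]
        rcases hx1.eq_or_lt with heq | hlt
        · rw [← heq]
          simp [Real.cos_pi_div_two]
        · have ht : Real.tan x ≤ -1 := by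
            calc Real.tan x ≤ Real.tan (-(π/4)) := tan_mono hlt hx2 (by linarith)
              _ = -1 := by rw [Real.tan_neg, Real.tan_pi_div_four]
          have h1 : max (min (1 - Real.tan x) 1 - max (-Real.tan x) 0) 0 = 0 := by
            rw [min_eq_right (by linarith : (1:ℝ) ≤ 1 - Real.tan x),
              max_eq_left (by linarith : (0:ℝ) ≤ -Real.tan x)]
            apply max_eq_right
            linarith
          rw [h1, zero_mul])
      (fun x _ => hasDerivAt_const x 0)
  have p2 := piece h (fun x => 2*Real.cos x + 2*Real.sin x)
      (fun x => 2*Real.sin x - 2*Real.cos x) (a := -(π/4)) (b := 0)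
      (by linarith)
      (by fun_prop)
      (by
        intro x hx
        have hx1 := hx.1
        have hx2 := hx.2
        simp only [hh]
        have hcos : 0 < Real.cos x :=
          Real.cos_pos_of_mem_Ioo ⟨by linarith, by linarith⟩
        have ht1 : -1 ≤ Real.tan x := by
          calc (-1:ℝ) = Real.tan (-(π/4)) := by rw [Real.tan_neg, Real.tan_pi_div_four]
            _ ≤ Real.tan x := tan_mono (by linarith) hx1 (by linarith)
        have ht2 : Real.tan x ≤ 0 :=
          Real.tan_nonpos_of_nonpos_of_neg_pi_div_two_le hx2 (by linarith)
        rw [min_eq_right (by linarith : (1:ℝ) ≤ 1 - Real.tan x),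
          max_eq_left (by linarith : (0:ℝ) ≤ -Real.tan x),
          show (1:ℝ) - -Real.tan x = 1 + Real.tan x by ring,
          max_eq_left (by linarith : (0:ℝ) ≤ 1 + Real.tan x),
          Real.tan_eq_sin_div_cos]
        field_simp)
      (by
        intro x _
        have hd : HasDerivAt (fun x => 2*Real.sin x - 2*Real.cos x)
            (2*Real.cos x - 2*(-Real.sin x)) x :=
          ((Real.hasDerivAt_sin x).const_mul 2).sub ((Real.hasDerivAt_cos x).const_mul 2)
        convert hd using 1
        ring)
  have p3 := piece h (fun x => 2*Real.cos x - 2*Real.sin x)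
      (fun x => 2*Real.sin x + 2*Real.cos x) (a := 0) (b := π/4)
      (by linarith)
      (by fun_prop)
      (by
        intro x hx
        have hx1 := hx.1
        have hx2 := hx.2
        simp only [hh]
        have hcos : 0 < Real.cos x :=
          Real.cos_pos_of_mem_Ioo ⟨by linarith, by linarith⟩
        have ht1 : 0 ≤ Real.tan x :=
          Real.tan_nonneg_of_nonneg_of_le_pi_div_two hx1 (by linarith)
        have ht2 : Real.tan x ≤ 1 := by
          calc Real.tan x ≤ Real.tan (π/4) := tan_mono (by linarith) hx2 (by linarith)
            _ = 1 := Real.tan_pi_div_four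
        rw [min_eq_left (by linarith : 1 - Real.tan x ≤ 1),
          max_eq_right (by linarith : -Real.tan x ≤ 0), sub_zero,
          max_eq_left (by linarith : (0:ℝ) ≤ 1 - Real.tan x),
          Real.tan_eq_sin_div_cos]
        field_simp)
      (by
        intro x _
        have hd : HasDerivAt (fun x => 2*Real.sin x + 2*Real.cos x)
            (2*Real.cos x + 2*(-Real.sin x)) x :=
          ((Real.hasDerivAt_sin x).const_mul 2).add ((Real.hasDerivAt_cos x).const_mul 2)
        convert hd using 1
        ring)
  have p4 := piece h (fun _ => (0:ℝ)) (fun _ => (0:ℝ)) (a := π/4) (b := π/2)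
      (by linarith) continuous_const
      (by
        intro x hx
        have hx1 := hx.1
        have hx2 := hx.2
        simp only [hh]
        rcases hx2.eq_or_lt with heq | hlt
        · rw [heq]
          simp [Real.cos_pi_div_two]
        · have ht : 1 ≤ Real.tan x := by
            calc (1:ℝ) = Real.tan (π/4) := Real.tan_pi_div_four.symm
              _ ≤ Real.tan x := tan_mono (by linarith) hx1 hlt
          have h1 : max (min (1 - Real.tan x) 1 - max (-Real.tan x) 0) 0 = 0 := by
            rw [min_eq_left (by linarith : 1 - Real.tan x ≤ 1),
              max_eq_right (by linarith : -Real.tan x ≤ 0), sub_zero]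
            apply max_eq_right
            linarith
          rw [h1, zero_mul])
      (fun x _ => hasDerivAt_const x 0)
  obtain ⟨i1, v1⟩ := p1
  obtain ⟨i2, v2⟩ := p2
  obtain ⟨i3, v3⟩ := p3
  obtain ⟨i4, v4⟩ := p4
  rw [← integral_Ioc_eq_integral_Ioo, ← intervalIntegral.integral_of_le (by linarith)]
  rw [← intervalIntegral.integral_add_adjacent_intervals i1 ((i2.trans i3).trans i4),
    ← intervalIntegral.integral_add_adjacent_intervals i2 (i3.trans i4),
    ← intervalIntegral.integral_add_adjacent_intervals i3 i4, v1, v2, v3, v4]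
  simp only [Real.sin_neg, Real.cos_neg, Real.sin_pi_div_four, Real.cos_pi_div_four,
    Real.sin_pi_div_two, Real.cos_pi_div_two, Real.sin_zero, Real.cos_zero]
  have h2 : Real.sqrt 2 ^ 2 = 2 := Real.sq_sqrt (by norm_num)
  linear_combination (0:ℝ) * h2

theorem isosceles_triangle_resistance :
    (3/8 : ℝ) *
      ((∫ p in {p : ℝ × ℝ | p.1 ∈ Set.Ioo (-(π/2)) (π/2) ∧
          p.2 ∈ Set.Icc (0:ℝ) 1 ∧ p.2 < -Real.tan p.1},
        (1 + Real.cos (π/2 + 2*p.1)) * Real.cos p.1) +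
      (∫ p in {p : ℝ × ℝ | p.1 ∈ Set.Ioo (-(π/2)) (π/2) ∧
          p.2 ∈ Set.Icc (0:ℝ) 1 ∧ 1 - Real.tan p.1 < p.2},
        (1 + Real.cos (2*p.1 - π/2)) * Real.cos p.1) +
      (∫ p in {p : ℝ × ℝ | p.1 ∈ Set.Ioo (-(π/2)) (π/2) ∧
          p.2 ∈ Set.Icc (0:ℝ) 1 ∧ -Real.tan p.1 < p.2 ∧ p.2 < 1 - Real.tan p.1},
        2 * Real.cos p.1)) = Real.sqrt 2 := by
  rw [reg1, reg2, reg3]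
  ring
end

section
/- For Ψ ∈ (0, π/2], F(Ψ) = 1 + (1/6) sin²Ψ + (2√2 sin(Ψ/2) - 2 sin⁴(Ψ/2) - Ψ)/sin Ψ satisfies F(Ψ) < 3/2. -/
open Real

lemma zigzag_poly (x r : ℝ) (hx0 : 0 < x) (hx : x ≤ 1/2) (hr1 : 1.41421 < r) (hr2 : r < 1.41422) :
    (2*r-3) + (77/48)*x - (3/2+2*r)*x^2 + (2/3)*x^4 < 0 := by
  nlinarith [sq_nonneg (x - 0.1927), mul_nonneg (sq_nonneg x) (sub_nonneg.2 hx),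
    mul_nonneg (mul_nonneg hx0.le hx0.le) (sub_nonneg.2 hx), sq_nonneg x]

lemma zigzag_aux (s c r : ℝ) (hs0 : 0 < s) (hc0 : 0 < c) (hsc : s^2 + c^2 = 1)
    (hr2 : r^2 = 2) (hr1 : 1.41421 < r) (hsle : s ≤ r/2) :
    2*r*s - 2*s^4 - (2*s + (11/48)*s^3) < (1/2 - (1/6)*(2*s*c)^2) * (2*s*c) := by
  have hrpos : 0 < r := by linarith
  have hrlt : r < 1.41422 := by nlinarith
  have hx : s^2 ≤ 1/2 := by nlinarith
  have hrs : r * s ≤ 1 := by nlinarith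
  have ha0 : (0:ℝ) ≤ 1 - s^2/2 - s^4/2 := by nlinarith
  have hclow : 1 - s^2/2 - s^4/2 ≤ c := by
    have h2 : (1 - s^2/2 - s^4/2)^2 ≤ c^2 := by nlinarith [sq_nonneg s, sq_nonneg (s^2)]
    nlinarith
  have hQ : (0:ℝ) < 1 - (4/3)*s^2 + (4/3)*s^4 := by nlinarith [sq_nonneg (s^2)]
  have hrhs : (1/2 - (1/6)*(2*s*c)^2) * (2*s*c)
      = s * c * (1 - (4/3)*s^2 + (4/3)*s^4) := by
    linear_combination (-(4/3)*s^3*c) * hsc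
  rw [hrhs]
  have h1 : s * (1 - s^2/2 - s^4/2) * (1 - (4/3)*s^2 + (4/3)*s^4)
      ≤ s * c * (1 - (4/3)*s^2 + (4/3)*s^4) := by
    nlinarith [mul_nonneg (mul_nonneg (sub_nonneg.2 hclow) hs0.le) hQ.le]
  have h5 : r * s^5 ≤ s^4 := by
    nlinarith [mul_nonneg (sub_nonneg.2 hrs) (pow_pos hs0 4).le]
  have hf := zigzag_poly (s^2) r (by positivity) hx hr1 hrlt
  have hsf : s * ((2*r-3) + (77/48)*s^2 - (3/2+2*r)*(s^2)^2 + (2/3)*(s^2)^4) < 0 :=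
    mul_neg_of_pos_of_neg hs0 hf
  nlinarith [hsf, h5, h1]

/-- The limiting resistance of cavities bounded by canonical zigzag lines inscribed in a
circular arc of angular half-size `Ψ`. -/
noncomputable def zigzagResistance (Ψ : ℝ) : ℝ :=
  1 + (1/6) * Real.sin Ψ ^ 2 +
    (2 * Real.sqrt 2 * Real.sin (Ψ/2) - 2 * Real.sin (Ψ/2) ^ 4 - Ψ) / Real.sin Ψ

theorem zigzagResistance_lt (Ψ : ℝ) (hΨ : Ψ ∈ Set.Ioc 0 (π/2)) :
    zigzagResistance Ψ < 3/2 := by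
  obtain ⟨h0, h1⟩ := hΨ
  have hπ : (3 : ℝ) < π := Real.pi_gt_three
  have hπ4 : π ≤ 4 := Real.pi_le_four
  set t : ℝ := Ψ/2 with ht
  have ht0 : 0 < t := by positivity
  have ht1 : t ≤ π/4 := by rw [ht]; linarith
  have htle1 : t ≤ 1 := by linarith
  set s : ℝ := Real.sin t with hs
  set c : ℝ := Real.cos t with hc
  have hs0 : 0 < s := Real.sin_pos_of_pos_of_lt_pi ht0 (by linarith)
  have hc0 : 0 < c := Real.cos_pos_of_mem_Ioo ⟨by linarith, by linarith⟩
  have hsc : s^2 + c^2 = 1 := Real.sin_sq_add_cos_sq t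
  have hst : s < t := Real.sin_lt ht0
  have hb := Real.sin_bound (x := t) (by rw [abs_of_pos ht0]; exact htle1)
  rw [abs_of_pos ht0] at hb
  have hb' : s ≤ t - t^3/6 + t^4 * (5/96) := by
    have := abs_le.1 hb
    nlinarith [this.2, mul_le_mul_of_nonneg_left htle1 (pow_pos ht0 4).le]
  have ht4 : t^4 ≤ t^3 := by
    nlinarith [mul_le_mul_of_nonneg_left htle1 (pow_pos ht0 3).le]
  have hs3 : s^3 ≤ t^3 := pow_le_pow_left₀ hs0.le hst.le 3
  have hΨ2t : Ψ = 2*t := by rw [ht]; ring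
  have hkey : 2*s + (11/48)*s^3 ≤ Ψ := by
    have h1' : s + (11/96)*t^3 ≤ t := by linarith
    nlinarith [h1', hs3, hΨ2t]
  have hsin : Real.sin Ψ = 2 * s * c := by
    rw [hΨ2t, Real.sin_two_mul]
  have h2sc : 0 < 2*s*c := by positivity
  have hr2 : Real.sqrt 2 ^ 2 = 2 := Real.sq_sqrt (by norm_num)
  have hr0 : (0:ℝ) < Real.sqrt 2 := Real.sqrt_pos.2 (by norm_num)
  have hrgt : 1.41421 < Real.sqrt 2 := by nlinarith
  have hsle : s ≤ Real.sqrt 2 / 2 := by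
    have h := Real.sin_le_sin_of_le_of_le_pi_div_two (by linarith) (by linarith) ht1
    rwa [Real.sin_pi_div_four] at h
  have key : (2 * Real.sqrt 2 * s - 2 * s ^ 4 - Ψ) / Real.sin Ψ
      < 1/2 - (1/6) * Real.sin Ψ ^ 2 := by
    rw [hsin, div_lt_iff₀ h2sc]
    have := zigzag_aux s c (Real.sqrt 2) hs0 hc0 hsc hr2 hrgt hsle
    linarith [this, hkey]
  have hgoal : zigzagResistance Ψ
      = 1 + (1/6) * Real.sin Ψ ^ 2 + (2 * Real.sqrt 2 * s - 2 * s ^ 4 - Ψ) / Real.sin Ψ := by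
    rw [zigzagResistance, hs, ht]
  rw [hgoal]
  linarith [key]
end

section
/- For Ψ ∈ (0, π/2): (3/(16 sin Ψ)) ∫_{-Ψ}^{Ψ} ∫_{Ψ}^{π/2} (1 + sin β) sin((β - α)/2) dβ dα = (3/(16 sin Ψ)) [4 sin Ψ - (8√2/3) sin(Ψ/2) - (16/3) sin⁴(Ψ/2)]. -/
open Real

lemma inner_deriv_id (α β : ℝ) :
    -2 * (-Real.sin ((β - α)/2) * (1/2)) + Real.cos ((β + α)/2) * (1/2)
      - 1/3 * (Real.cos ((3*β - α)/2) * (3/2))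
      = (1 + Real.sin β) * Real.sin ((β - α)/2) := by
  have hβ : Real.sin β = 2 * Real.sin (β/2) * Real.cos (β/2) := by
    have := Real.sin_two_mul (β/2)
    rw [show 2*(β/2) = β by ring] at this
    linarith
  have h1 : (β - α)/2 = β/2 - α/2 := by ring
  have h2 : (β + α)/2 = β/2 + α/2 := by ring
  have h3 : (3*β - α)/2 = β/2 + (β/2 + (β/2 - α/2)) := by ring
  rw [h1, h2, h3, hβ]
  simp only [Real.sin_add, Real.cos_add, Real.sin_sub, Real.cos_sub]
  linear_combination (1/2*Real.sin (β/2)*Real.sin (α/2)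
    - 1/2*Real.cos (β/2)*Real.cos (α/2)) * Real.sin_sq_add_cos_sq (β/2)

lemma inner_integral (α Ψ : ℝ) :
    (∫ β in Ψ..(π/2), (1 + Real.sin β) * Real.sin ((β - α)/2))
      = (-2 * Real.cos ((π/2 - α)/2) + Real.sin ((π/2 + α)/2)
          - 1/3 * Real.sin ((3*(π/2) - α)/2))
        - (-2 * Real.cos ((Ψ - α)/2) + Real.sin ((Ψ + α)/2)
          - 1/3 * Real.sin ((3*Ψ - α)/2)) := by
  rw [← intervalIntegral.integral_eq_sub_of_hasDerivAt
    (f := fun β => -2 * Real.cos ((β - α)/2) + Real.sin ((β + α)/2)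
      - 1/3 * Real.sin ((3*β - α)/2))]
  · intro β _
    have h1 : HasDerivAt (fun β : ℝ => (β - α)/2) (1/2) β := by
      simpa using ((hasDerivAt_id β).sub_const α).div_const 2
    have h2 : HasDerivAt (fun β : ℝ => (β + α)/2) (1/2) β := by
      simpa using ((hasDerivAt_id β).add_const α).div_const 2
    have h3 : HasDerivAt (fun β : ℝ => (3*β - α)/2) (3/2) β := by
      have := (((hasDerivAt_id β).const_mul 3).sub_const α).div_const 2
      simpa using this
    have H := ((h1.cos.const_mul (-2)).add h2.sin).sub (h3.sin.const_mul (1/3))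
    rw [inner_deriv_id α β] at H
    exact H
  · apply Continuous.intervalIntegrable
    fun_prop

theorem zigzag_term_I (Ψ : ℝ) (hΨ : Ψ ∈ Set.Ioo 0 (π/2)) :
    (3 / (16 * Real.sin Ψ)) * ∫ α in (-Ψ)..Ψ, ∫ β in Ψ..(π/2),
        (1 + Real.sin β) * Real.sin ((β - α)/2)
      = (3 / (16 * Real.sin Ψ)) *
        (4 * Real.sin Ψ - (8 * Real.sqrt 2 / 3) * Real.sin (Ψ/2)
          - (16/3) * Real.sin (Ψ/2) ^ 4) := by
  congr 1
  rw [intervalIntegral.integral_congr (g := fun α =>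
    (-2 * Real.cos ((π/2 - α)/2) + Real.sin ((π/2 + α)/2)
          - 1/3 * Real.sin ((3*(π/2) - α)/2))
        - (-2 * Real.cos ((Ψ - α)/2) + Real.sin ((Ψ + α)/2)
          - 1/3 * Real.sin ((3*Ψ - α)/2)))
    (fun α _ => inner_integral α Ψ)]
  rw [intervalIntegral.integral_eq_sub_of_hasDerivAt
    (f := fun α => (-(2:ℝ)) * (-2 * Real.sin ((π/2 - α)/2)) + (-2) * Real.cos ((π/2 + α)/2)
        - 1/3 * (2 * Real.cos ((3*(π/2) - α)/2))
        + ((-2) * (2 * Real.sin ((Ψ - α)/2)) + 2 * Real.cos ((Ψ + α)/2)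
          + 1/3 * (2 * Real.cos ((3*Ψ - α)/2))))]
  · -- final algebraic/trig computation
    have e1 : (π/2 - Ψ)/2 = π/4 - Ψ/2 := by ring
    have e2 : (π/2 + Ψ)/2 = π/4 + Ψ/2 := by ring
    have e1' : (π/2 - -Ψ)/2 = π/4 + Ψ/2 := by ring
    have e2' : (π/2 + -Ψ)/2 = π/4 - Ψ/2 := by ring
    have e3 : (3*(π/2) - Ψ)/2 = π/2 + (π/4 - Ψ/2) := by ring
    have e3' : (3*(π/2) - -Ψ)/2 = π/2 + (π/4 + Ψ/2) := by ring
    have f1 : (Ψ - Ψ)/2 = 0 := by ring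
    have f2 : (Ψ + Ψ)/2 = Ψ := by ring
    have f3 : (3*Ψ - Ψ)/2 = Ψ := by ring
    have f1' : (Ψ - -Ψ)/2 = Ψ := by ring
    have f2' : (Ψ + -Ψ)/2 = 0 := by ring
    have f3' : (3*Ψ - -Ψ)/2 = 2*Ψ := by ring
    rw [e1, e2, e1', e2', e3, e3', f1, f2, f3, f1', f2', f3']
    have hs : Real.sin Ψ = 2 * Real.sin (Ψ/2) * Real.cos (Ψ/2) := by
      have := Real.sin_two_mul (Ψ/2)
      rw [show 2*(Ψ/2) = Ψ by ring] at this
      linarith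
    have hc : Real.cos Ψ = 1 - 2 * Real.sin (Ψ/2)^2 := by
      have h1 := Real.cos_two_mul (Ψ/2)
      have h2 := Real.sin_sq_add_cos_sq (Ψ/2)
      rw [show 2*(Ψ/2) = Ψ by ring] at h1
      nlinarith
    have hc2 : Real.cos (2*Ψ) = 2 * Real.cos Ψ^2 - 1 := Real.cos_two_mul Ψ
    simp only [Real.sin_add, Real.cos_add, Real.sin_sub, Real.cos_sub,
      Real.sin_pi_div_four, Real.cos_pi_div_four, Real.sin_pi_div_two,
      Real.cos_pi_div_two, Real.sin_zero, Real.cos_zero]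
    rw [hc2, hc, hs]
    ring
  · intro α _
    have p1 : HasDerivAt (fun α : ℝ => (π/2 - α)/2) (-1/2) α := by
      simpa using ((hasDerivAt_id α).const_sub (π/2)).div_const 2
    have p2 : HasDerivAt (fun α : ℝ => (π/2 + α)/2) (1/2) α := by
      simpa using ((hasDerivAt_id α).const_add (π/2)).div_const 2
    have p3 : HasDerivAt (fun α : ℝ => (3*(π/2) - α)/2) (-1/2) α := by
      simpa using ((hasDerivAt_id α).const_sub (3*(π/2))).div_const 2
    have q1 : HasDerivAt (fun α : ℝ => (Ψ - α)/2) (-1/2) α := by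
      simpa using ((hasDerivAt_id α).const_sub Ψ).div_const 2
    have q2 : HasDerivAt (fun α : ℝ => (Ψ + α)/2) (1/2) α := by
      simpa using ((hasDerivAt_id α).const_add Ψ).div_const 2
    have q3 : HasDerivAt (fun α : ℝ => (3*Ψ - α)/2) (-1/2) α := by
      simpa using ((hasDerivAt_id α).const_sub (3*Ψ)).div_const 2
    have H := (((((p1.sin.const_mul (-2)).const_mul (-2)).add
        (p2.cos.const_mul (-2))).sub ((p3.cos.const_mul 2).const_mul (1/3))).add
      ((((q1.sin.const_mul 2).const_mul (-2)).add (q2.cos.const_mul 2)).add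
        ((q3.cos.const_mul 2).const_mul (1/3))))
    convert H using 1
    · funext y
      simp only [Pi.add_apply, Pi.sub_apply]
    ring
  · apply Continuous.intervalIntegrable
    fun_prop
end

section
/- For Ψ ∈ (0, π/2): (3/(16 sin Ψ)) ∫_{-Ψ}^{Ψ} ∫_{π/2}^{π} 2 (sin((β - α)/2) - |cos((α + β)/2)|) dβ dα = (3/(16 sin Ψ)) [16√2 sin(Ψ/2) - 8Ψ]. -/
open Real

/-- Closed form of the inner integral (`max α 0` handles the sign case split). -/
noncomputable def Gz (α : ℝ) : ℝ :=
  8 * Real.sin (α/2 + π/4) - 4 * Real.sin (α/2) + 4 * Real.cos (α/2)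
    - 8 * Real.sin ((α + π - max α 0)/2)

lemma zig_sin_part (α a b : ℝ) :
    ∫ β in a..b, 2 * Real.sin ((β - α)/2)
      = -4 * Real.cos ((b - α)/2) + 4 * Real.cos ((a - α)/2) := by
  have h : ∀ β ∈ Set.uIcc a b, HasDerivAt (fun x => -4 * Real.cos ((x - α)/2))
      (2 * Real.sin ((β - α)/2)) β := by
    intro β _
    have h1 : HasDerivAt (fun x : ℝ => (x - α)/2) (1/2) β :=
      ((hasDerivAt_id β).sub_const α).div_const 2
    have h2 := (h1.cos).const_mul (-4 : ℝ)
    refine h2.congr_deriv ?_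
    ring
  rw [intervalIntegral.integral_eq_sub_of_hasDerivAt h
    ((Continuous.intervalIntegrable (by fun_prop) _ _))]
  ring

lemma zig_cos_part (α a b : ℝ) :
    ∫ β in a..b, 2 * Real.cos ((α + β)/2)
      = 4 * Real.sin ((α + b)/2) - 4 * Real.sin ((α + a)/2) := by
  have h : ∀ β ∈ Set.uIcc a b, HasDerivAt (fun x => 4 * Real.sin ((α + x)/2))
      (2 * Real.cos ((α + β)/2)) β := by
    intro β _
    have h1 : HasDerivAt (fun x : ℝ => (α + x)/2) (1/2) β :=
      ((hasDerivAt_id β).const_add α).div_const 2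
    have h2 := (h1.sin).const_mul (4 : ℝ)
    refine h2.congr_deriv ?_
    ring
  rw [intervalIntegral.integral_eq_sub_of_hasDerivAt h
    ((Continuous.intervalIntegrable (by fun_prop) _ _))]

lemma zig_inner (α : ℝ) (h1 : -(π/2) < α) (h2 : α < π/2) :
    (∫ β in (π/2)..π, 2 * (Real.sin ((β - α)/2) - |Real.cos ((α + β)/2)|)) = Gz α := by
  have hπ : (0:ℝ) < π := Real.pi_pos
  have hsplit :
      (∫ β in (π/2)..π, 2 * (Real.sin ((β - α)/2) - |Real.cos ((α + β)/2)|))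
        = (∫ β in (π/2)..π, 2 * Real.sin ((β - α)/2))
          - ∫ β in (π/2)..π, 2 * |Real.cos ((α + β)/2)| := by
    rw [← intervalIntegral.integral_sub ((Continuous.intervalIntegrable (by fun_prop) _ _))
      ((Continuous.intervalIntegrable (by fun_prop) _ _))]
    congr 1
    ext β
    ring
  rw [hsplit, zig_sin_part]
  rcases le_or_gt α 0 with hα | hα
  · -- α ≤ 0 : cos((α+β)/2) ≥ 0 on the whole interval
    have habs : Set.EqOn (fun β => 2 * |Real.cos ((α + β)/2)|)
        (fun β => 2 * Real.cos ((α + β)/2)) (Set.uIcc (π/2) π) := by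
      intro β hβ
      rw [Set.uIcc_of_le (by linarith)] at hβ
      have hb1 : π/2 ≤ β := hβ.1
      have hb2 : β ≤ π := hβ.2
      have hcos : 0 ≤ Real.cos ((α + β)/2) := by
        apply Real.cos_nonneg_of_mem_Icc
        constructor <;> [linarith; linarith]
      simp [abs_of_nonneg hcos]
    rw [intervalIntegral.integral_congr habs, zig_cos_part]
    unfold Gz
    rw [max_eq_right hα]
    rw [show (π - α)/2 = π/2 - α/2 by ring, show (π/2 - α)/2 = π/4 - α/2 by ring,
      show (α + π)/2 = α/2 + π/2 by ring, show (α + π/2)/2 = α/2 + π/4 by ring,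
      show (α + π - 0)/2 = α/2 + π/2 by ring]
    simp only [Real.cos_pi_div_two_sub, Real.cos_sub, Real.sin_add,
      Real.cos_pi_div_four, Real.sin_pi_div_four, Real.cos_pi_div_two, Real.sin_pi_div_two]
    ring
  · -- 0 < α : split the |cos| integral at π - α
    have hm1 : π/2 ≤ π - α := by linarith
    have hm2 : π - α ≤ π := by linarith
    have hadd : (∫ β in (π/2)..(π - α), 2 * |Real.cos ((α + β)/2)|)
        + (∫ β in (π - α)..π, 2 * |Real.cos ((α + β)/2)|)
        = ∫ β in (π/2)..π, 2 * |Real.cos ((α + β)/2)| := by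
      apply intervalIntegral.integral_add_adjacent_intervals <;>
        · exact Continuous.intervalIntegrable (by fun_prop) _ _
    rw [← hadd]
    have habs1 : Set.EqOn (fun β => 2 * |Real.cos ((α + β)/2)|)
        (fun β => 2 * Real.cos ((α + β)/2)) (Set.uIcc (π/2) (π - α)) := by
      intro β hβ
      rw [Set.uIcc_of_le hm1] at hβ
      have hb1 : π/2 ≤ β := hβ.1
      have hb2 : β ≤ π - α := hβ.2
      have hcos : 0 ≤ Real.cos ((α + β)/2) := by
        apply Real.cos_nonneg_of_mem_Icc
        constructor <;> [linarith; linarith]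
      simp [abs_of_nonneg hcos]
    have habs2 : Set.EqOn (fun β => 2 * |Real.cos ((α + β)/2)|)
        (fun β => -(2 * Real.cos ((α + β)/2))) (Set.uIcc (π - α) π) := by
      intro β hβ
      rw [Set.uIcc_of_le hm2] at hβ
      have hb1 : π - α ≤ β := hβ.1
      have hb2 : β ≤ π := hβ.2
      have hcos : Real.cos ((α + β)/2) ≤ 0 := by
        apply Real.cos_nonpos_of_pi_div_two_le_of_le
        · linarith
        · linarith
      simp [abs_of_nonpos hcos]
    rw [intervalIntegral.integral_congr habs1, intervalIntegral.integral_congr habs2,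
      intervalIntegral.integral_neg, zig_cos_part, zig_cos_part]
    unfold Gz
    rw [max_eq_left hα.le]
    rw [show (π - α)/2 = π/2 - α/2 by ring, show (π/2 - α)/2 = π/4 - α/2 by ring,
      show (α + (π - α))/2 = π/2 by ring, show (α + π)/2 = α/2 + π/2 by ring,
      show (α + π/2)/2 = α/2 + π/4 by ring, show (α + π - α)/2 = π/2 by ring]
    simp only [Real.cos_pi_div_two_sub, Real.cos_sub, Real.sin_add,
      Real.cos_pi_div_four, Real.sin_pi_div_four, Real.cos_pi_div_two, Real.sin_pi_div_two]
    ring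

lemma Gz_continuous : Continuous Gz := by
  unfold Gz
  continuity

theorem zigzag_term_II (Ψ : ℝ) (hΨ : Ψ ∈ Set.Ioo 0 (π/2)) :
    (3 / (16 * Real.sin Ψ)) * ∫ α in (-Ψ)..Ψ, ∫ β in (π/2)..π,
        2 * (Real.sin ((β - α)/2) - |Real.cos ((α + β)/2)|)
      = (3 / (16 * Real.sin Ψ)) *
        (16 * Real.sqrt 2 * Real.sin (Ψ/2) - 8 * Ψ) := by
  obtain ⟨hΨ0, hΨ2⟩ := hΨ
  congr 1
  -- replace the inner integral by its closed form Gz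
  have hcongr : Set.EqOn
      (fun α => ∫ β in (π/2)..π, 2 * (Real.sin ((β - α)/2) - |Real.cos ((α + β)/2)|))
      Gz (Set.uIcc (-Ψ) Ψ) := by
    intro α hα
    rw [Set.uIcc_of_le (by linarith)] at hα
    exact zig_inner α (by linarith [hα.1]) (by linarith [hα.2])
  rw [intervalIntegral.integral_congr hcongr]
  -- split the integral at 0
  have hadd : (∫ α in (-Ψ)..(0:ℝ), Gz α) + (∫ α in (0:ℝ)..Ψ, Gz α) = ∫ α in (-Ψ)..Ψ, Gz α := by
    apply intervalIntegral.integral_add_adjacent_intervals <;>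
      exact Gz_continuous.intervalIntegrable _ _
  rw [← hadd]
  -- left piece
  have hL : (∫ α in (-Ψ)..(0:ℝ), Gz α)
      = (-16 * Real.cos ((0:ℝ)/2 + π/4) + 8 * Real.cos ((0:ℝ)/2) - 8 * Real.sin ((0:ℝ)/2))
        - (-16 * Real.cos ((-Ψ)/2 + π/4) + 8 * Real.cos ((-Ψ)/2) - 8 * Real.sin ((-Ψ)/2)) := by
    have hGL : Set.EqOn Gz
        (fun α => 8 * Real.sin (α/2 + π/4) - 4 * Real.sin (α/2) - 4 * Real.cos (α/2))
        (Set.uIcc (-Ψ) (0:ℝ)) := by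
      intro α hα
      rw [Set.uIcc_of_le (by linarith)] at hα
      have hα0 : α ≤ 0 := hα.2
      unfold Gz
      rw [max_eq_right hα0, show (α + π - 0)/2 = α/2 + π/2 by ring]
      simp only [Real.sin_add, Real.cos_pi_div_two, Real.sin_pi_div_two]
      ring
    rw [intervalIntegral.integral_congr hGL]
    have h : ∀ α ∈ Set.uIcc (-Ψ) (0:ℝ),
        HasDerivAt (fun x => -16 * Real.cos (x/2 + π/4) + 8 * Real.cos (x/2) - 8 * Real.sin (x/2))
          (8 * Real.sin (α/2 + π/4) - 4 * Real.sin (α/2) - 4 * Real.cos (α/2)) α := by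
      intro α _
      have d1 : HasDerivAt (fun x : ℝ => x/2 + π/4) (1/2) α :=
        ((hasDerivAt_id α).div_const 2).add_const (π/4)
      have d2 : HasDerivAt (fun x : ℝ => x/2) (1/2) α := (hasDerivAt_id α).div_const 2
      have := ((d1.cos.const_mul (-16 : ℝ)).add (d2.cos.const_mul (8 : ℝ))).sub
        (d2.sin.const_mul (8 : ℝ))
      refine this.congr_deriv ?_
      ring
    rw [intervalIntegral.integral_eq_sub_of_hasDerivAt h
      ((Continuous.intervalIntegrable (by fun_prop) _ _))]
  -- right piece
  have hR : (∫ α in (0:ℝ)..Ψ, Gz α)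
      = (-16 * Real.cos (Ψ/2 + π/4) + 8 * Real.cos (Ψ/2) + 8 * Real.sin (Ψ/2) - 8 * Ψ)
        - (-16 * Real.cos ((0:ℝ)/2 + π/4) + 8 * Real.cos ((0:ℝ)/2) + 8 * Real.sin ((0:ℝ)/2)
            - 8 * 0) := by
    have hGR : Set.EqOn Gz
        (fun α => 8 * Real.sin (α/2 + π/4) - 4 * Real.sin (α/2) + 4 * Real.cos (α/2) - 8)
        (Set.uIcc (0:ℝ) Ψ) := by
      intro α hα
      rw [Set.uIcc_of_le (by linarith)] at hα
      have hα0 : 0 ≤ α := hα.1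
      unfold Gz
      rw [max_eq_left hα0, show (α + π - α)/2 = π/2 by ring, Real.sin_pi_div_two]
      ring
    rw [intervalIntegral.integral_congr hGR]
    have h : ∀ α ∈ Set.uIcc (0:ℝ) Ψ,
        HasDerivAt (fun x => -16 * Real.cos (x/2 + π/4) + 8 * Real.cos (x/2)
            + 8 * Real.sin (x/2) - 8 * x)
          (8 * Real.sin (α/2 + π/4) - 4 * Real.sin (α/2) + 4 * Real.cos (α/2) - 8) α := by
      intro α _
      have d1 : HasDerivAt (fun x : ℝ => x/2 + π/4) (1/2) α :=
        ((hasDerivAt_id α).div_const 2).add_const (π/4)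
      have d2 : HasDerivAt (fun x : ℝ => x/2) (1/2) α := (hasDerivAt_id α).div_const 2
      have d3 : HasDerivAt (fun x : ℝ => 8 * x) (8:ℝ) α := by simpa using (hasDerivAt_id α).const_mul (8:ℝ)
      have := (((d1.cos.const_mul (-16 : ℝ)).add (d2.cos.const_mul (8 : ℝ))).add
        (d2.sin.const_mul (8 : ℝ))).sub d3
      refine this.congr_deriv ?_
      ring
    rw [intervalIntegral.integral_eq_sub_of_hasDerivAt h
      ((Continuous.intervalIntegrable (by fun_prop) _ _))]
  rw [hL, hR]
  rw [show (-Ψ)/2 = -(Ψ/2) by ring, show (-(Ψ/2)) + π/4 = π/4 - Ψ/2 by ring]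
  simp only [Real.cos_sub, Real.cos_add, Real.cos_neg, Real.sin_neg,
    Real.cos_pi_div_four, Real.sin_pi_div_four, zero_div, Real.sin_zero, Real.cos_zero]
  ring
end

section
/- For Ψ ∈ (0, π/2): (3/(16 sin Ψ)) ∫_{-Ψ}^{Ψ} ∫_{π-Ψ}^{π} (1 - cos(α + β)) |cos((α + β)/2)| dβ dα = (3/(16 sin Ψ)) [-(8/3) sin Ψ + (8/9) sin³Ψ + (8/3)Ψ]. -/
open Real

/-- derivative of sin((x+c)/2)^3 -/
lemma hd_sin3 (c x : ℝ) :
    HasDerivAt (fun x => Real.sin ((x + c)/2) ^ 3)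
      (3 * Real.sin ((x + c)/2) ^ 2 * (Real.cos ((x + c)/2) * (1/2))) x := by
  have h0 : HasDerivAt (fun x : ℝ => (x + c)/2) (1/2) x := by
    simpa using ((hasDerivAt_id x).add_const c).div_const 2
  have h1 : HasDerivAt (fun x => Real.sin ((x + c)/2)) (Real.cos ((x + c)/2) * (1/2)) x :=
    (Real.hasDerivAt_sin _).comp x h0
  simpa [mul_comm, mul_assoc, mul_left_comm] using h1.fun_pow 3

/-- antiderivative of sin((x+c)/2)^3 -/
lemma hd_anti (c x : ℝ) :
    HasDerivAt (fun x => -2 * Real.cos ((x + c)/2) + (2/3) * Real.cos ((x + c)/2) ^ 3)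
      (Real.sin ((x + c)/2) ^ 3) x := by
  have h0 : HasDerivAt (fun x : ℝ => (x + c)/2) (1/2) x := by
    simpa using ((hasDerivAt_id x).add_const c).div_const 2
  have h1 : HasDerivAt (fun x => Real.cos ((x + c)/2)) (-Real.sin ((x + c)/2) * (1/2)) x :=
    (Real.hasDerivAt_cos _).comp x h0
  have h2 := ((h1.const_mul (-2 : ℝ))).add ((h1.fun_pow 3).const_mul ((2:ℝ)/3))
  refine h2.congr_deriv ?_
  have h3 := Real.sin_sq_add_cos_sq ((x + c)/2)
  push_cast
  linear_combination (-Real.sin ((x + c)/2)) * h3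

lemma g_int_left {a b : ℝ} (ha : 0 ≤ a) (hb : b ≤ π) (hab : a ≤ b) :
    ∫ x in a..b, (1 - Real.cos x) * |Real.cos (x/2)|
      = (4/3) * Real.sin (b/2) ^ 3 - (4/3) * Real.sin (a/2) ^ 3 := by
  have hcong : ∫ x in a..b, (1 - Real.cos x) * |Real.cos (x/2)|
      = ∫ x in a..b, (1 - Real.cos x) * Real.cos (x/2) := by
    apply intervalIntegral.integral_congr
    intro x hx
    rw [Set.uIcc_of_le hab] at hx
    have h1 : 0 ≤ x := le_trans ha hx.1
    have h2 : x ≤ π := le_trans hx.2 hb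
    have : 0 ≤ Real.cos (x/2) := by
      apply Real.cos_nonneg_of_mem_Icc
      constructor <;> [linarith [Real.pi_pos]; linarith]
    simp only [abs_of_nonneg this]
  rw [hcong]
  have key : ∀ x ∈ Set.uIcc a b,
      HasDerivAt (fun x => (4/3) * Real.sin (x/2) ^ 3) ((1 - Real.cos x) * Real.cos (x/2)) x := by
    intro x _
    have := (hd_sin3 0 x).const_mul (4/3 : ℝ)
    have hcos : Real.cos x = 1 - 2 * Real.sin (x/2) ^ 2 := by
      have h1 := Real.cos_sq (x/2)
      have h2 : 2 * (x/2) = x := by ring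
      rw [h2] at h1
      have h3 := Real.sin_sq_add_cos_sq (x/2)
      linarith
    simp only [add_zero] at this
    refine this.congr_deriv ?_
    rw [hcos]; ring
  rw [intervalIntegral.integral_eq_sub_of_hasDerivAt key (by
    apply Continuous.intervalIntegrable; continuity)]

lemma g_int_right {a b : ℝ} (ha : π ≤ a) (hb : b ≤ 2*π) (hab : a ≤ b) :
    ∫ x in a..b, (1 - Real.cos x) * |Real.cos (x/2)|
      = (4/3) * Real.sin (a/2) ^ 3 - (4/3) * Real.sin (b/2) ^ 3 := by
  have hcong : ∫ x in a..b, (1 - Real.cos x) * |Real.cos (x/2)|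
      = ∫ x in a..b, (1 - Real.cos x) * (-Real.cos (x/2)) := by
    apply intervalIntegral.integral_congr
    intro x hx
    rw [Set.uIcc_of_le hab] at hx
    have h1 : π ≤ x := le_trans ha hx.1
    have h2 : x ≤ 2*π := le_trans hx.2 hb
    have : Real.cos (x/2) ≤ 0 := by
      apply Real.cos_nonpos_of_pi_div_two_le_of_le
      · linarith
      · linarith
    simp only [abs_of_nonpos this]
  rw [hcong]
  have key : ∀ x ∈ Set.uIcc a b,
      HasDerivAt (fun x => -((4/3) * Real.sin (x/2) ^ 3))
        ((1 - Real.cos x) * (-Real.cos (x/2))) x := by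
    intro x _
    have := ((hd_sin3 0 x).const_mul (4/3 : ℝ)).neg
    have hcos : Real.cos x = 1 - 2 * Real.sin (x/2) ^ 2 := by
      have h1 := Real.cos_sq (x/2)
      have h2 : 2 * (x/2) = x := by ring
      rw [h2] at h1
      have h3 := Real.sin_sq_add_cos_sq (x/2)
      linarith
    simp only [add_zero] at this
    refine this.congr_deriv ?_
    rw [hcos]; ring
  rw [intervalIntegral.integral_eq_sub_of_hasDerivAt key (by
    apply Continuous.intervalIntegrable; continuity)]
  ring

lemma inner_shift (Ψ α : ℝ) :
    (∫ β in (π - Ψ)..π, (1 - Real.cos (α + β)) * |Real.cos ((α + β)/2)|)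
      = ∫ x in (α + (π - Ψ))..(α + π), (1 - Real.cos x) * |Real.cos (x/2)| :=
  intervalIntegral.integral_comp_add_left (fun x => (1 - Real.cos x) * |Real.cos (x/2)|) α

lemma inner_left {Ψ α : ℝ} (hΨ0 : 0 < Ψ) (hΨπ : Ψ < π/2) (h1 : -Ψ ≤ α) (h2 : α ≤ 0) :
    (∫ β in (π - Ψ)..π, (1 - Real.cos (α + β)) * |Real.cos ((α + β)/2)|)
      = (4/3) * Real.sin ((α + π)/2) ^ 3 - (4/3) * Real.sin ((α + (π - Ψ))/2) ^ 3 := by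
  rw [inner_shift]
  exact g_int_left (by linarith) (by linarith) (by linarith)

lemma inner_right {Ψ α : ℝ} (hΨ0 : 0 < Ψ) (hΨπ : Ψ < π/2) (h1 : 0 ≤ α) (h2 : α ≤ Ψ) :
    (∫ β in (π - Ψ)..π, (1 - Real.cos (α + β)) * |Real.cos ((α + β)/2)|)
      = 8/3 - (4/3) * Real.sin ((α + (π - Ψ))/2) ^ 3 - (4/3) * Real.sin ((α + π)/2) ^ 3 := by
  rw [inner_shift]
  have hg : Continuous fun x => (1 - Real.cos x) * |Real.cos (x/2)| := by continuity
  have hi1 : IntervalIntegrable (fun x => (1 - Real.cos x) * |Real.cos (x/2)|)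
      MeasureTheory.volume (α + (π - Ψ)) π := hg.intervalIntegrable _ _
  have hi2 : IntervalIntegrable (fun x => (1 - Real.cos x) * |Real.cos (x/2)|)
      MeasureTheory.volume π (α + π) := hg.intervalIntegrable _ _
  have hsplit := intervalIntegral.integral_add_adjacent_intervals hi1 hi2
  rw [← hsplit,
    g_int_left (a := α + (π - Ψ)) (b := π) (by linarith) (by linarith) (by linarith),
    g_int_right (a := π) (b := α + π) (by linarith) (by linarith) (by linarith)]
  have : Real.sin (π/2) = 1 := Real.sin_pi_div_two
  rw [this]
  ring

theorem zigzag_term_IV (Ψ : ℝ) (hΨ : Ψ ∈ Set.Ioo 0 (π/2)) :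
    (3 / (16 * Real.sin Ψ)) * ∫ α in (-Ψ)..Ψ, ∫ β in (π - Ψ)..π,
        (1 - Real.cos (α + β)) * |Real.cos ((α + β)/2)|
      = (3 / (16 * Real.sin Ψ)) *
        (-(8/3) * Real.sin Ψ + (8/9) * Real.sin Ψ ^ 3 + (8/3) * Ψ) := by
  obtain ⟨hΨ0, hΨπ⟩ := hΨ
  congr 1
  have hcont2 : Continuous (Function.uncurry fun α β : ℝ =>
      (1 - Real.cos (α + β)) * |Real.cos ((α + β)/2)|) := by
    apply Continuous.mul
    · exact continuous_const.sub ((Real.continuous_cos).comp (continuous_fst.add continuous_snd))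
    · exact ((Real.continuous_cos).comp ((continuous_fst.add continuous_snd).div_const 2)).abs
  have hinner_cont : Continuous fun α => ∫ β in (π - Ψ)..π,
      (1 - Real.cos (α + β)) * |Real.cos ((α + β)/2)| :=
    intervalIntegral.continuous_parametric_intervalIntegral_of_continuous'
      (μ := MeasureTheory.volume) hcont2 _ _
  rw [← intervalIntegral.integral_add_adjacent_intervals (a := -Ψ) (b := 0) (c := Ψ)
    (hinner_cont.intervalIntegrable _ _) (hinner_cont.intervalIntegrable _ _)]
  have hL : (∫ α in (-Ψ)..(0:ℝ), ∫ β in (π - Ψ)..π,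
      (1 - Real.cos (α + β)) * |Real.cos ((α + β)/2)|)
      = ∫ α in (-Ψ)..(0:ℝ),
        ((4/3) * Real.sin ((α + π)/2) ^ 3 - (4/3) * Real.sin ((α + (π - Ψ))/2) ^ 3) := by
    apply intervalIntegral.integral_congr
    intro α hα
    rw [Set.uIcc_of_le (by linarith)] at hα
    exact inner_left hΨ0 hΨπ hα.1 hα.2
  have hR : (∫ α in (0:ℝ)..Ψ, ∫ β in (π - Ψ)..π,
      (1 - Real.cos (α + β)) * |Real.cos ((α + β)/2)|)
      = ∫ α in (0:ℝ)..Ψ,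
        (8/3 - (4/3) * Real.sin ((α + (π - Ψ))/2) ^ 3 - (4/3) * Real.sin ((α + π)/2) ^ 3) := by
    apply intervalIntegral.integral_congr
    intro α hα
    rw [Set.uIcc_of_le (by linarith)] at hα
    exact inner_right hΨ0 hΨπ hα.1 hα.2
  rw [hL, hR]
  have hc1 : Continuous fun x : ℝ => Real.sin ((x + π)/2) ^ 3 :=
    (Real.continuous_sin.comp ((continuous_id.add continuous_const).div_const 2)).pow 3
  have hc2 : Continuous fun x : ℝ => Real.sin ((x + (π - Ψ))/2) ^ 3 :=
    (Real.continuous_sin.comp ((continuous_id.add continuous_const).div_const 2)).pow 3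
  have hInt1 : (∫ α in (-Ψ)..(0:ℝ),
      ((4/3) * Real.sin ((α + π)/2) ^ 3 - (4/3) * Real.sin ((α + (π - Ψ))/2) ^ 3))
      = (fun x : ℝ => (4/3) * (-2 * Real.cos ((x + π)/2) + (2/3) * Real.cos ((x + π)/2) ^ 3)
          - (4/3) * (-2 * Real.cos ((x + (π - Ψ))/2) + (2/3) * Real.cos ((x + (π - Ψ))/2) ^ 3)) 0
        - (fun x : ℝ => (4/3) * (-2 * Real.cos ((x + π)/2) + (2/3) * Real.cos ((x + π)/2) ^ 3)
          - (4/3) * (-2 * Real.cos ((x + (π - Ψ))/2)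
            + (2/3) * Real.cos ((x + (π - Ψ))/2) ^ 3)) (-Ψ) := by
    refine intervalIntegral.integral_eq_sub_of_hasDerivAt
      (f := fun x : ℝ => (4/3) * (-2 * Real.cos ((x + π)/2) + (2/3) * Real.cos ((x + π)/2) ^ 3)
          - (4/3) * (-2 * Real.cos ((x + (π - Ψ))/2) + (2/3) * Real.cos ((x + (π - Ψ))/2) ^ 3))
      ?_ ?_
    · intro x _
      exact ((hd_anti π x).const_mul (4/3 : ℝ)).sub ((hd_anti (π - Ψ) x).const_mul (4/3 : ℝ))
    · exact ((hc1.const_smul ((4:ℝ)/3)).sub (hc2.const_smul ((4:ℝ)/3))).intervalIntegrable _ _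
  have hInt2 : (∫ α in (0:ℝ)..Ψ,
      (8/3 - (4/3) * Real.sin ((α + (π - Ψ))/2) ^ 3 - (4/3) * Real.sin ((α + π)/2) ^ 3))
      = (fun x : ℝ => (8/3) * x
          - (4/3) * (-2 * Real.cos ((x + (π - Ψ))/2) + (2/3) * Real.cos ((x + (π - Ψ))/2) ^ 3)
          - (4/3) * (-2 * Real.cos ((x + π)/2) + (2/3) * Real.cos ((x + π)/2) ^ 3)) Ψ
        - (fun x : ℝ => (8/3) * x
          - (4/3) * (-2 * Real.cos ((x + (π - Ψ))/2) + (2/3) * Real.cos ((x + (π - Ψ))/2) ^ 3)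
          - (4/3) * (-2 * Real.cos ((x + π)/2) + (2/3) * Real.cos ((x + π)/2) ^ 3)) 0 := by
    refine intervalIntegral.integral_eq_sub_of_hasDerivAt
      (f := fun x : ℝ => (8/3) * x
          - (4/3) * (-2 * Real.cos ((x + (π - Ψ))/2) + (2/3) * Real.cos ((x + (π - Ψ))/2) ^ 3)
          - (4/3) * (-2 * Real.cos ((x + π)/2) + (2/3) * Real.cos ((x + π)/2) ^ 3))
      ?_ ?_
    · intro x _
      have hid : HasDerivAt (fun x : ℝ => (8:ℝ)/3 * x) ((8:ℝ)/3) x := by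
        simpa using (hasDerivAt_id x).const_mul ((8:ℝ)/3)
      exact (hid.sub ((hd_anti (π - Ψ) x).const_mul (4/3 : ℝ))).sub
        ((hd_anti π x).const_mul (4/3 : ℝ))
    · exact ((continuous_const.sub (hc2.const_smul ((4:ℝ)/3))).sub
        (hc1.const_smul ((4:ℝ)/3))).intervalIntegrable _ _
  rw [hInt1, hInt2]
  simp only []
  have e1 : Real.cos (((0:ℝ) + π)/2) = 0 := by
    rw [show ((0:ℝ) + π)/2 = π/2 by ring, Real.cos_pi_div_two]
  have e2 : Real.cos (((0:ℝ) + (π - Ψ))/2) = Real.sin (Ψ/2) := by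
    rw [show ((0:ℝ) + (π - Ψ))/2 = π/2 - Ψ/2 by ring, Real.cos_pi_div_two_sub]
  have e3 : Real.cos ((-Ψ + π)/2) = Real.sin (Ψ/2) := by
    rw [show (-Ψ + π)/2 = π/2 - Ψ/2 by ring, Real.cos_pi_div_two_sub]
  have e4 : Real.cos ((-Ψ + (π - Ψ))/2) = Real.sin Ψ := by
    rw [show (-Ψ + (π - Ψ))/2 = π/2 - Ψ by ring, Real.cos_pi_div_two_sub]
  have e5 : Real.cos ((Ψ + π)/2) = -Real.sin (Ψ/2) := by
    rw [show (Ψ + π)/2 = Ψ/2 + π/2 by ring, Real.cos_add_pi_div_two]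
  have e6 : Real.cos ((Ψ + (π - Ψ))/2) = 0 := by
    rw [show (Ψ + (π - Ψ))/2 = π/2 by ring, Real.cos_pi_div_two]
  rw [e1, e2, e3, e4, e5, e6]
  ring
end
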